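/- Let k be a field and let f : X → Y and g : Y → Z be morphisms of schemes of finite type over k such that f is an open and surjective map of underlying topological spaces. If both f and g ∘ f are weakly equidimensional, then g is weakly equidimensional. -/

import Mathlib

open AlgebraicGeometry CategoryTheory

/-- The local dimension of a topological space at a point: the infimum, over all open
neighbourhoods `U` of the point, of the Krull dimension of `U`. -/
noncomputable def locDim (T : Type*) [TopologicalSpace T] (t : T) : WithBot ℕ∞ :=
  ⨅ U : {U : Set T // IsOpen U ∧ t ∈ U}, topologicalKrullDim U.1

/-- The local dimension, viewed as an integer.  (At every point of a scheme of finite type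
over a field the local dimension is a natural number, so no information is lost.) -/
noncomputable def locDimZ (T : Type*) [TopologicalSpace T] (t : T) : ℤ :=
  ((locDim T t).unbotD 0).toNat

/-- The dimension function `dim_f(x) = dim_x X - dim_{f x} Y` of a map. -/
noncomputable def dimFn {X Y : Type*} [TopologicalSpace X] [TopologicalSpace Y]
    (f : X → Y) : X → ℤ :=
  fun x => locDimZ X x - locDimZ Y (f x)

/-- A map is weakly equidimensional if its dimension function is locally constant. -/
def WeaklyEquidimensional {X Y : Type*} [TopologicalSpace X] [TopologicalSpace Y]
    (f : X → Y) : Prop :=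
  IsLocallyConstant (dimFn f)

/-- A map is equidimensional if it is weakly equidimensional and the value of the dimension
function at every point `x` is the local dimension of the fibre through `x` at `x`. -/
def Equidimensional {X Y : Type*} [TopologicalSpace X] [TopologicalSpace Y]
    (f : X → Y) : Prop :=
  WeaklyEquidimensional f ∧ ∀ x : X, dimFn f x = locDimZ (f ⁻¹' {f x}) ⟨x, rfl⟩

/-- `X` is a scheme of finite type over the field `k`, via the structure morphism `s`:
the structure morphism is quasi-compact, quasi-separated, and locally of finite type. -/
def FiniteTypeOverField {k : Type} [Field k] {X : Scheme}
    (s : X ⟶ Spec (CommRingCat.of k)) : Prop :=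
  LocallyOfFiniteType s ∧ QuasiCompact s ∧ QuasiSeparated s

theorem statement1 (k : Type) [Field k]
    (X Y Z : Scheme)
    (sX : X ⟶ Spec (CommRingCat.of k)) (sY : Y ⟶ Spec (CommRingCat.of k))
    (sZ : Z ⟶ Spec (CommRingCat.of k))
    (hX : FiniteTypeOverField sX) (hY : FiniteTypeOverField sY)
    (hZ : FiniteTypeOverField sZ)
    (f : X ⟶ Y) (g : Y ⟶ Z) (hf : f ≫ sY = sX) (hg : g ≫ sZ = sY)
    (hfopen : IsOpenMap (⇑f.base)) (hfsurj : Function.Surjective (⇑f.base))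
    (hwf : WeaklyEquidimensional (⇑f.base))
    (hwgf : WeaklyEquidimensional (⇑(f ≫ g).base)) :
    WeaklyEquidimensional (⇑g.base) := by
  have hcomp : (dimFn (⇑g.base)) ∘ (⇑f.base) =
      fun x => dimFn (⇑(f ≫ g).base) x - dimFn (⇑f.base) x := by
    funext x
    simp only [Function.comp_apply, dimFn, Scheme.Hom.comp_apply, TopCat.coe_comp,
      Function.comp_apply]
    ring
  have hlc : IsLocallyConstant ((dimFn (⇑g.base)) ∘ (⇑f.base)) := by
    rw [hcomp]; exact hwgf.sub hwf
  intro s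
  rw [← Set.image_preimage_eq (dimFn (⇑g.base) ⁻¹' s) hfsurj]
  exact hfopen _ (hlc s)
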